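/- Let x ∈ Ω with g = Ax − b, let ᾱ > 0, let g^f be the free gradient and g^r the reduced free gradient at x with parameter ᾱ. Then P_Ω(x − ᾱ·g^f) = x − ᾱ·g^r. -/

import Mathlib

open Matrix

/-- The projected free-gradient step coincides with the reduced free-gradient step:
`P_Ω(x − ᾱ g^f) = x − ᾱ g^r`. -/
theorem proj_freeGradient_step_eq_reducedFreeGradient_step (n : ℕ)
    (A : Matrix (Fin n) (Fin n) ℝ) (b l u x : Fin n → ℝ)
    (hlu : l ≤ u) (hx : l ≤ x ∧ x ≤ u)
    (g : Fin n → ℝ) (hg : g = A *ᵥ x - b)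
    (P : (Fin n → ℝ) → (Fin n → ℝ))
    (hP : ∀ v j, P v j = min (u j) (max (l j) (v j)))
    (α : ℝ) (hα : 0 < α) (gf gr : Fin n → ℝ)
    (hgf : ∀ j, gf j = if x j = l j ∨ x j = u j then 0 else g j)
    (hgr : ∀ j, gr j = if x j = l j ∨ x j = u j then 0
      else if 0 < g j then min ((x j - l j) / α) (g j)
      else max ((x j - u j) / α) (g j)) :
    P (x - α • gf) = x - α • gr := by
  funext j
  have h1 := hx.1 j
  have h2 := hx.2 j
  rw [hP]
  simp only [Pi.sub_apply, Pi.smul_apply, smul_eq_mul, hgf, hgr]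
  by_cases h : x j = l j ∨ x j = u j
  · simp only [if_pos h, mul_zero, sub_zero]
    rw [max_eq_right h1, min_eq_right h2]
  · push_neg at h
    have hl : l j < x j := lt_of_le_of_ne h1 (Ne.symm h.1)
    have hu : x j < u j := lt_of_le_of_ne h2 h.2
    rw [if_neg (by push_neg; exact h), if_neg (by push_neg; exact h)]
    by_cases hgj : 0 < g j
    · rw [if_pos hgj]
      rcases le_total ((x j - l j) / α) (g j) with hc | hc
      · rw [min_eq_left hc]
        have hxl : x j - α * ((x j - l j) / α) = l j := by
          field_simp; ring
        rw [hxl]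
        have : x j - α * g j ≤ l j := by
          have := (div_le_iff₀ hα).mp hc
          linarith
        rw [max_eq_left this, min_eq_right (hlu j)]
      · rw [min_eq_right hc]
        have hll : l j ≤ x j - α * g j := by
          have := (le_div_iff₀ hα).mp hc
          nlinarith
        rw [max_eq_right hll]
        have : x j - α * g j ≤ u j := by nlinarith
        rw [min_eq_right this]
    · rw [if_neg hgj]
      push_neg at hgj
      rcases le_total ((x j - u j) / α) (g j) with hc | hc
      · rw [max_eq_right hc]
        have hll : l j ≤ x j - α * g j := by nlinarith
        rw [max_eq_right hll]
        have : x j - α * g j ≤ u j := by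
          have := (div_le_iff₀ hα).mp hc
          linarith
        rw [min_eq_right this]
      · rw [max_eq_left hc]
        have hxu : x j - α * ((x j - u j) / α) = u j := by field_simp; ring
        rw [hxu]
        have : u j ≤ x j - α * g j := by
          have := (le_div_iff₀ hα).mp hc
          nlinarith
        rw [max_eq_right (le_trans (le_of_lt (lt_trans hl hu)) this), min_eq_left this]
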